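/- Let p = 2, α > 0, β > 0. For every γ > 0, one has I(γ, γ, γ) = 3·J₂(γ), where J₂(γ) := inf{ (1/2)‖∂ₓu‖²_{L²} − ((α+β)/3)‖u‖³_{L³} : u ∈ H¹(ℝ,ℂ), ‖u‖²_{L²} = γ }. -/

import Mathlib

open MeasureTheory Filter Complex

noncomputable section

/-- Membership in `H¹(ℝ, ℂ)` (modeled via the classical derivative). -/
def InH1 (f : ℝ → ℂ) : Prop :=
  MemLp f 2 (volume : Measure ℝ) ∧ Differentiable ℝ f ∧
    MemLp (deriv f) 2 (volume : Measure ℝ)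

/-- `‖f‖_{L²}²`. -/
def massSq (f : ℝ → ℂ) : ℝ := ∫ x : ℝ, ‖f x‖ ^ 2

/-- `‖∂ₓ f‖_{L²}²`. -/
def kinetic (f : ℝ → ℂ) : ℝ := ∫ x : ℝ, ‖deriv f x‖ ^ 2

/-- `∫ |f|^{p+1}`. -/
def potential (p : ℝ) (f : ℝ → ℂ) : ℝ := ∫ x : ℝ, ‖f x‖ ^ (p + 1)

/-- `Re ∫ u₁ u₂ (conj u₃)`. -/
def interaction (u1 u2 u3 : ℝ → ℂ) : ℝ :=
  ∫ x : ℝ, (u1 x * u2 x * (starRingEnd ℂ) (u3 x)).re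

/-- The energy functional `E`. -/
def energy (p α β : ℝ) (u1 u2 u3 : ℝ → ℂ) : ℝ :=
  ((1 / 2) * kinetic u1 - β / (p + 1) * potential p u1)
    + ((1 / 2) * kinetic u2 - β / (p + 1) * potential p u2)
    + ((1 / 2) * kinetic u3 - β / (p + 1) * potential p u3)
    - α * interaction u1 u2 u3

/-- The set of energies of admissible triples for `I(γ, μ, s)`. -/
def constraintSet (p α β γ μ s : ℝ) : Set ℝ :=
  { e | ∃ u1 u2 u3 : ℝ → ℂ, InH1 u1 ∧ InH1 u2 ∧ InH1 u3 ∧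
      massSq u1 = γ ∧ massSq u2 = μ ∧ massSq u3 = s ∧ e = energy p α β u1 u2 u3 }

/-- `I(γ, μ, s)`. -/
def Iinf (p α β γ μ s : ℝ) : ℝ := sInf (constraintSet p α β γ μ s)

/-- A minimizing sequence for `I(γ, μ, s)`. -/
def MinimizingSeq (p α β γ μ s : ℝ) (u1 u2 u3 : ℕ → ℝ → ℂ) : Prop :=
  (∀ n, InH1 (u1 n) ∧ InH1 (u2 n) ∧ InH1 (u3 n)) ∧
  Tendsto (fun n => massSq (u1 n)) atTop (nhds γ) ∧
  Tendsto (fun n => massSq (u2 n)) atTop (nhds μ) ∧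
  Tendsto (fun n => massSq (u3 n)) atTop (nhds s) ∧
  Tendsto (fun n => energy p α β (u1 n) (u2 n) (u3 n)) atTop
    (nhds (Iinf p α β γ μ s))

/-- `∫_{y-r}^{y+r} (|u₁|² + |u₂|² + |u₃|²)`. -/
def localMass (u1 u2 u3 : ℝ → ℂ) (y r : ℝ) : ℝ :=
  ∫ x in Set.Icc (y - r) (y + r), (‖u1 x‖ ^ 2 + ‖u2 x‖ ^ 2 + ‖u3 x‖ ^ 2)

/-- `λ` is the concentration parameter of the sequence. -/
def IsConcentration (u1 u2 u3 : ℕ → ℝ → ℂ) (lam : ℝ) : Prop :=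
  Tendsto (fun r : ℝ =>
      limsup (fun n => ⨆ y : ℝ, localMass (u1 n) (u2 n) (u3 n) y r) atTop)
    atTop (nhds lam)

/-- The squared `H¹` norm. -/
def H1normSq (f : ℝ → ℂ) : ℝ := massSq f + kinetic f

/-- The `H¹(ℝ; ℂ³)` distance between two triples. -/
def H1dist3 (u v : (ℝ → ℂ) × (ℝ → ℂ) × (ℝ → ℂ)) : ℝ :=
  Real.sqrt (H1normSq (u.1 - v.1) + H1normSq (u.2.1 - v.2.1)
    + H1normSq (u.2.2 - v.2.2))

/-- The set `𝒢_{γ,μ,s}` of minimizers of `I(γ, μ, s)`. -/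
def GSet (p α β γ μ s : ℝ) : Set ((ℝ → ℂ) × (ℝ → ℂ) × (ℝ → ℂ)) :=
  { u | InH1 u.1 ∧ InH1 u.2.1 ∧ InH1 u.2.2 ∧
      massSq u.1 = γ ∧ massSq u.2.1 = μ ∧ massSq u.2.2 = s ∧
      energy p α β u.1 u.2.1 u.2.2 = Iinf p α β γ μ s }

/-- Symmetric decreasing rearrangement of a real function:
`f*(x) = |{t > 0 : x ∈ I_t}|` where `I_t` is the open interval centered at `0`
of length `|{ z : |f z| > t }|`. -/
def symmRearr (f : ℝ → ℝ) (x : ℝ) : ℝ :=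
  (volume { t : ℝ | 0 < t ∧
      ENNReal.ofReal (2 * |x|) < volume { z : ℝ | t < |f z| } }).toReal

/-- The constraint set for `J(γ, μ)` (with `Q₁(u) = γ`, `Q₂(u) = μ`). -/
def JconstraintSet (p α β γ μ : ℝ) : Set ℝ :=
  { e | ∃ u1 u2 u3 : ℝ → ℂ, InH1 u1 ∧ InH1 u2 ∧ InH1 u3 ∧
      massSq u1 + massSq u3 = γ ∧ massSq u2 + massSq u3 = μ ∧
      e = energy p α β u1 u2 u3 }

/-- `J(γ, μ)`. -/
def Jinf (p α β γ μ : ℝ) : ℝ := sInf (JconstraintSet p α β γ μ)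

/-- A minimizing sequence for `J(γ, μ)`. -/
def JMinimizingSeq (p α β γ μ : ℝ) (u1 u2 u3 : ℕ → ℝ → ℂ) : Prop :=
  (∀ n, InH1 (u1 n) ∧ InH1 (u2 n) ∧ InH1 (u3 n)) ∧
  Tendsto (fun n => massSq (u1 n) + massSq (u3 n)) atTop (nhds γ) ∧
  Tendsto (fun n => massSq (u2 n) + massSq (u3 n)) atTop (nhds μ) ∧
  Tendsto (fun n => energy p α β (u1 n) (u2 n) (u3 n)) atTop
    (nhds (Jinf p α β γ μ))

/-- The set `ℳ_{γ,μ}` of minimizers of `J(γ, μ)`. -/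
def MSet (p α β γ μ : ℝ) : Set ((ℝ → ℂ) × (ℝ → ℂ) × (ℝ → ℂ)) :=
  { u | InH1 u.1 ∧ InH1 u.2.1 ∧ InH1 u.2.2 ∧
      massSq u.1 + massSq u.2.2 = γ ∧ massSq u.2.1 + massSq u.2.2 = μ ∧
      energy p α β u.1 u.2.1 u.2.2 = Jinf p α β γ μ }

end

noncomputable section

/-- pointwise derivative of `‖f‖²`. -/
def nsDeriv (f : ℝ → ℂ) (x : ℝ) : ℝ :=
  2 * ((f x).re * (deriv f x).re + (f x).im * (deriv f x).im)

lemma hasDerivAt_normSq' {f : ℝ → ℂ} (hf : Differentiable ℝ f) (x : ℝ) :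
    HasDerivAt (fun y => ‖f y‖ ^ 2) (nsDeriv f x) x := by
  have h := (hf x).hasDerivAt
  have hre : HasDerivAt (fun y => (f y).re) ((deriv f x).re) x :=
    (HasFDerivAt.comp_hasDerivAt x Complex.reCLM.hasFDerivAt h)
  have him : HasDerivAt (fun y => (f y).im) ((deriv f x).im) x :=
    (HasFDerivAt.comp_hasDerivAt x Complex.imCLM.hasFDerivAt h)
  have h2 : HasDerivAt (fun y => (f y).re ^ 2 + (f y).im ^ 2) _ x := (hre.pow 2).add (him.pow 2)
  have hfun : (fun y => (f y).re ^ 2 + (f y).im ^ 2) = fun y => ‖f y‖ ^ 2 := by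
    funext y
    rw [Complex.sq_norm, Complex.normSq_apply]; ring
  rw [hfun] at h2
  convert h2 using 1
  simp [nsDeriv]; ring

end
noncomputable section
lemma nsDeriv_abs_le {f : ℝ → ℂ} (x : ℝ) :
    |nsDeriv f x| ≤ 2 * ‖f x‖ * ‖deriv f x‖ := by
  have h1 : |(f x).re| ≤ ‖f x‖ := Complex.abs_re_le_norm _
  have h2 : |(f x).im| ≤ ‖f x‖ := Complex.abs_im_le_norm _
  have h3 : |(deriv f x).re| ≤ ‖deriv f x‖ := Complex.abs_re_le_norm _
  have h4 : |(deriv f x).im| ≤ ‖deriv f x‖ := Complex.abs_im_le_norm _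
  -- 2D Cauchy-Schwarz
  set a := (f x).re; set b := (f x).im; set c := (deriv f x).re; set d := (deriv f x).im
  have hn1 : ‖f x‖ ^ 2 = a ^ 2 + b ^ 2 := by
    rw [Complex.sq_norm, Complex.normSq_apply]; ring
  have hn2 : ‖deriv f x‖ ^ 2 = c ^ 2 + d ^ 2 := by
    rw [Complex.sq_norm, Complex.normSq_apply]; ring
  have key : (a * c + b * d) ^ 2 ≤ (‖f x‖ * ‖deriv f x‖) ^ 2 := by
    have : (a * c + b * d) ^ 2 ≤ (a ^ 2 + b ^ 2) * (c ^ 2 + d ^ 2) := by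
      nlinarith [sq_nonneg (a * d - b * c)]
    calc (a * c + b * d) ^ 2 ≤ (a ^ 2 + b ^ 2) * (c ^ 2 + d ^ 2) := this
      _ = (‖f x‖ * ‖deriv f x‖) ^ 2 := by rw [mul_pow, hn1, hn2]
  have habs : |a * c + b * d| ≤ ‖f x‖ * ‖deriv f x‖ := by
    have h := abs_le_of_sq_le_sq' key (by positivity)
    exact abs_le.2 h
  calc |nsDeriv f x| = 2 * |a * c + b * d| := by
        rw [nsDeriv, abs_mul]; norm_num; rfl
    _ ≤ 2 * (‖f x‖ * ‖deriv f x‖) := by linarith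
    _ = 2 * ‖f x‖ * ‖deriv f x‖ := by ring
end
noncomputable section

lemma InH1.intSq {f : ℝ → ℂ} (hf : InH1 f) : Integrable (fun x => ‖f x‖ ^ 2) volume :=
  hf.1.norm.integrable_sq

lemma InH1.intDerivSq {f : ℝ → ℂ} (hf : InH1 f) :
    Integrable (fun x => ‖deriv f x‖ ^ 2) volume := hf.2.2.norm.integrable_sq

lemma InH1.cont {f : ℝ → ℂ} (hf : InH1 f) : Continuous f := hf.2.1.continuous

lemma nsDeriv_meas {f : ℝ → ℂ} (hf : InH1 f) : Measurable (nsDeriv f) := by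
  have h1 : Measurable f := hf.cont.measurable
  have h2 : Measurable (deriv f) := measurable_deriv f
  unfold nsDeriv
  fun_prop

lemma nsDeriv_int {f : ℝ → ℂ} (hf : InH1 f) : Integrable (nsDeriv f) volume := by
  refine Integrable.mono' (hf.intSq.add hf.intDerivSq) (nsDeriv_meas hf).aestronglyMeasurable
    (Eventually.of_forall fun x => ?_)
  have h := nsDeriv_abs_le (f := f) x
  have : 2 * ‖f x‖ * ‖deriv f x‖ ≤ ‖f x‖ ^ 2 + ‖deriv f x‖ ^ 2 := by
    nlinarith [sq_nonneg (‖f x‖ - ‖deriv f x‖)]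
  calc ‖nsDeriv f x‖ = |nsDeriv f x| := rfl
    _ ≤ 2 * ‖f x‖ * ‖deriv f x‖ := h
    _ ≤ ‖f x‖ ^ 2 + ‖deriv f x‖ ^ 2 := this

/-- The Sobolev-type sup bound. -/
lemma sup_bound {f : ℝ → ℂ} (hf : InH1 f) (x : ℝ) :
    ‖f x‖ ^ 2 ≤ massSq f + kinetic f := by
  set g : ℝ → ℝ := fun y => ‖f y‖ ^ 2 with hg
  have hgi : Integrable g volume := hf.intSq
  have hGi : Integrable (nsDeriv f) volume := nsDeriv_int hf
  have habs : Integrable (fun y => |nsDeriv f y|) volume := hGi.abs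
  -- ∫ |nsDeriv| ≤ massSq + kinetic
  have key2 : ∫ y, |nsDeriv f y| ≤ massSq f + kinetic f := by
    have : ∫ y, |nsDeriv f y| ≤ ∫ y, (‖f y‖ ^ 2 + ‖deriv f y‖ ^ 2) := by
      refine integral_mono habs (hf.intSq.add hf.intDerivSq) fun y => ?_
      have h := nsDeriv_abs_le (f := f) y
      nlinarith [sq_nonneg (‖f y‖ - ‖deriv f y‖)]
    rw [integral_add hf.intSq hf.intDerivSq] at this
    exact this
  -- ∀ δ > 0, ∃ y ≤ x, g y < δ
  have hsmall : ∀ δ : ℝ, 0 < δ → ∃ y, y ≤ x ∧ g y < δ := by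
    intro δ hδ
    by_contra hcon
    push_neg at hcon
    have hcon' : ∀ y ∈ Set.Iic x, δ ≤ g y := fun y hy => hcon y hy
    have : Integrable (fun _ : ℝ => δ) (volume.restrict (Set.Iic x)) := by
      refine Integrable.mono' (hgi.restrict) aestronglyMeasurable_const ?_
      filter_upwards [ae_restrict_mem measurableSet_Iic] with y hy
      rw [Real.norm_eq_abs, abs_of_pos hδ]; exact hcon' y hy
    rw [integrable_const_iff] at this
    rcases this with h | h
    · exact hδ.ne' h
    · have := h.measure_univ_lt_top; simp at this
  -- FTC: for y ≤ x, g x = g y + ∫ in y..x, nsDeriv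
  have hftc : ∀ y, y ≤ x → g x ≤ g y + ∫ t, |nsDeriv f t| := by
    intro y hy
    have hd : ∀ t ∈ Set.uIcc y x, HasDerivAt g (nsDeriv f t) t := fun t _ =>
      hasDerivAt_normSq' hf.2.1 t
    have hint : IntervalIntegrable (nsDeriv f) volume y x := hGi.intervalIntegrable
    have heq := intervalIntegral.integral_eq_sub_of_hasDerivAt hd hint
    have hle : ∫ t in y..x, nsDeriv f t ≤ ∫ t, |nsDeriv f t| := by
      calc ∫ t in y..x, nsDeriv f t ≤ |∫ t in y..x, nsDeriv f t| := le_abs_self _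
        _ ≤ ∫ t in y..x, |nsDeriv f t| := intervalIntegral.abs_integral_le_integral_abs hy
        _ = ∫ t in Set.Ioc y x, |nsDeriv f t| := intervalIntegral.integral_of_le hy
        _ ≤ ∫ t, |nsDeriv f t| := setIntegral_le_integral habs
            (Eventually.of_forall fun t => abs_nonneg _)
    linarith [heq ▸ hle]
  -- combine
  have : ∀ δ : ℝ, 0 < δ → g x ≤ δ + ∫ t, |nsDeriv f t| := by
    intro δ hδ
    obtain ⟨y, hyx, hgy⟩ := hsmall δ hδ
    linarith [hftc y hyx]
  have hfin : g x ≤ ∫ t, |nsDeriv f t| := by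
    by_contra hcon
    push_neg at hcon
    have := this ((g x - ∫ t, |nsDeriv f t|) / 2) (by linarith)
    linarith
  have hx : ‖f x‖ ^ 2 = g x := rfl
  linarith

end
noncomputable section

lemma massSq_nonneg (f : ℝ → ℂ) : 0 ≤ massSq f :=
  integral_nonneg fun x => by positivity

lemma kinetic_nonneg (f : ℝ → ℂ) : 0 ≤ kinetic f :=
  integral_nonneg fun x => by positivity

lemma norm_le_sqrt {f : ℝ → ℂ} (hf : InH1 f) (x : ℝ) :
    ‖f x‖ ≤ Real.sqrt (massSq f + kinetic f) := by
  have h := sup_bound hf x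
  have := Real.sqrt_le_sqrt h
  rwa [Real.sqrt_sq (norm_nonneg _)] at this

lemma cube_integrable {f : ℝ → ℂ} (hf : InH1 f) :
    Integrable (fun x => ‖f x‖ ^ 3) volume := by
  set M := Real.sqrt (massSq f + kinetic f) with hM
  refine Integrable.mono' (hf.intSq.const_mul M)
    (((hf.cont.norm.pow 3)).aestronglyMeasurable)
    (Eventually.of_forall fun x => ?_)
  have h1 : ‖f x‖ ≤ M := norm_le_sqrt hf x
  have h0 : (0:ℝ) ≤ ‖f x‖ := norm_nonneg _
  calc ‖‖f x‖ ^ 3‖ = ‖f x‖ ^ 3 := by rw [Real.norm_eq_abs, _root_.abs_of_nonneg (by positivity)]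
    _ = ‖f x‖ * ‖f x‖ ^ 2 := by ring
    _ ≤ M * ‖f x‖ ^ 2 := by nlinarith

lemma cube_le {f : ℝ → ℂ} (hf : InH1 f) :
    ∫ x, ‖f x‖ ^ 3 ≤ Real.sqrt (massSq f + kinetic f) * massSq f := by
  set M := Real.sqrt (massSq f + kinetic f) with hM
  have : ∫ x, ‖f x‖ ^ 3 ≤ ∫ x, M * ‖f x‖ ^ 2 := by
    refine integral_mono (cube_integrable hf) (hf.intSq.const_mul M) fun x => ?_
    have h1 : ‖f x‖ ≤ M := norm_le_sqrt hf x
    have h0 : (0:ℝ) ≤ ‖f x‖ := norm_nonneg _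
    nlinarith
  rwa [MeasureTheory.integral_const_mul] at this

lemma cube_nonneg (f : ℝ → ℂ) : 0 ≤ ∫ x : ℝ, ‖f x‖ ^ 3 :=
  integral_nonneg fun x => by positivity

/-- coercivity: lower bound for the scalar functional -/
lemma scalar_lb {C γ : ℝ} (hC : 0 < C) (hγ : 0 < γ) {u : ℝ → ℂ} (hu : InH1 u)
    (hm : massSq u = γ) :
    -(γ / 2 + (C * γ) ^ 2 / 2) ≤ 1 / 2 * kinetic u - C * ∫ x : ℝ, ‖u x‖ ^ 3 := by
  set K := kinetic u with hK
  have hK0 : 0 ≤ K := kinetic_nonneg u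
  set M := Real.sqrt (massSq u + kinetic u) with hM
  have hM0 : 0 ≤ M := Real.sqrt_nonneg _
  have hM2 : M ^ 2 = γ + K := by
    rw [hM, Real.sq_sqrt (by linarith [massSq_nonneg u, kinetic_nonneg u]), hm]
  have hP : ∫ x : ℝ, ‖u x‖ ^ 3 ≤ M * γ := by
    have h := cube_le hu
    rw [hm] at h
    simpa [hM, hm] using h
  have hP0 : 0 ≤ ∫ x : ℝ, ‖u x‖ ^ 3 := cube_nonneg u
  nlinarith [sq_nonneg (M - C * γ), mul_le_mul_of_nonneg_left hP hC.le]

end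
noncomputable section

lemma ofReal_deriv {h h' : ℝ → ℝ} (hd : ∀ x, HasDerivAt h (h' x) x) :
    deriv (fun x => (h x : ℂ)) = fun x => (h' x : ℂ) := by
  funext x
  exact ((hd x).ofReal_comp).deriv

lemma ofReal_massSq (h : ℝ → ℝ) : massSq (fun x => (h x : ℂ)) = ∫ x, h x ^ 2 := by
  unfold massSq
  congr 1; funext x
  rw [Complex.norm_real, Real.norm_eq_abs, _root_.sq_abs]

lemma ofReal_InH1 {h h' : ℝ → ℝ} (hd : ∀ x, HasDerivAt h (h' x) x)
    (h2 : Integrable (fun x => h x ^ 2) volume)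
    (h2' : Integrable (fun x => h' x ^ 2) volume) :
    InH1 (fun x => (h x : ℂ)) := by
  have hdiff : Differentiable ℝ (fun x => (h x : ℂ)) := fun x => ((hd x).ofReal_comp).differentiableAt
  have hder := ofReal_deriv hd
  refine ⟨?_, hdiff, ?_⟩
  · rw [memLp_two_iff_integrable_sq_norm (Continuous.aestronglyMeasurable (by
      exact Complex.continuous_ofReal.comp (continuous_iff_continuousAt.2 fun x => (hd x).continuousAt)))]
    convert h2 using 2 with x
    rw [Complex.norm_real, Real.norm_eq_abs, _root_.sq_abs]
  · rw [memLp_two_iff_integrable_sq_norm (measurable_deriv _).aestronglyMeasurable]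
    rw [hder]
    convert h2' using 2 with x
    rw [Complex.norm_real, Real.norm_eq_abs, _root_.sq_abs]

/-- Gaussian witness. -/
lemma exists_witness (γ : ℝ) (hγ : 0 < γ) : ∃ u : ℝ → ℂ, InH1 u ∧ massSq u = γ := by
  set a : ℝ := Real.sqrt (γ / Real.sqrt (Real.pi / 2)) with ha
  have hpi : 0 < Real.sqrt (Real.pi / 2) := Real.sqrt_pos.2 (by positivity)
  have ha2 : a ^ 2 = γ / Real.sqrt (Real.pi / 2) := Real.sq_sqrt (by positivity)
  set h : ℝ → ℝ := fun x => a * Real.exp (-x ^ 2) with hh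
  set h' : ℝ → ℝ := fun x => a * (Real.exp (-x ^ 2) * (-(2 * x))) with hh'
  have hd : ∀ x, HasDerivAt h (h' x) x := by
    intro x
    have h1 : HasDerivAt (fun x : ℝ => -x ^ 2) (-(2 * x)) x := by
      have h := (hasDerivAt_pow 2 x).neg; simp at h; exact h
    exact (h1.exp.const_mul a)
  have hsq : ∀ x : ℝ, Real.exp (-x ^ 2) ^ 2 = Real.exp (-(2 * x ^ 2)) := by
    intro x
    rw [← Real.exp_nat_mul]; ring_nf
  have h2 : Integrable (fun x => h x ^ 2) volume := by
    have := (integrable_exp_neg_mul_sq (by norm_num : (0:ℝ) < 2)).const_mul (a ^ 2)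
    refine this.congr ?_
    refine Eventually.of_forall fun x => ?_
    simp only [hh]
    rw [mul_pow, hsq]
    ring_nf
  have h2' : Integrable (fun x => h' x ^ 2) volume := by
    refine Integrable.mono' ((integrable_exp_neg_mul_sq (by norm_num : (0:ℝ) < 1)).const_mul
      (4 * a ^ 2)) (Continuous.aestronglyMeasurable (by
        have : Continuous h' := by
          simp only [hh']; continuity
        exact this.pow 2)) (Eventually.of_forall fun x => ?_)
    have hx2 : x ^ 2 ≤ Real.exp (x ^ 2) := by
      nlinarith [Real.add_one_le_exp (x ^ 2)]
    have hkey : h' x ^ 2 = 4 * a ^ 2 * (x ^ 2 * Real.exp (-(2 * x ^ 2))) := by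
      simp only [hh']; rw [mul_pow, mul_pow, hsq]; ring
    have hkey2 : x ^ 2 * Real.exp (-(2 * x ^ 2)) ≤ Real.exp (-x ^ 2) := by
      have : Real.exp (-(2 * x ^ 2)) = Real.exp (-x^2) * Real.exp (-x^2) := by
        rw [← Real.exp_add]; ring_nf
      rw [this, ← mul_assoc]
      have h3 : x ^ 2 * Real.exp (-x ^ 2) ≤ 1 := by
        rw [Real.exp_neg]
        rw [mul_inv_le_iff₀ (Real.exp_pos _)]
        simpa using hx2
      nlinarith [Real.exp_pos (-x^2), Real.exp_nonneg (-x^2), sq_nonneg x]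
    rw [Real.norm_eq_abs, _root_.abs_of_nonneg (sq_nonneg _), hkey]
    calc 4 * a ^ 2 * (x ^ 2 * Real.exp (-(2 * x ^ 2)))
        ≤ 4 * a ^ 2 * Real.exp (-x ^ 2) := by nlinarith [sq_nonneg a]
      _ = 4 * a ^ 2 * Real.exp (-(1:ℝ) * x ^ 2) := by ring_nf
  refine ⟨fun x => (h x : ℂ), ofReal_InH1 hd h2 h2', ?_⟩
  rw [ofReal_massSq]
  have : (fun x : ℝ => h x ^ 2) = fun x : ℝ => a ^ 2 * Real.exp (-(2:ℝ) * x ^ 2) := by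
    funext x; simp only [hh]; rw [mul_pow, hsq]; ring_nf
  rw [this, MeasureTheory.integral_const_mul, integral_gaussian, ha2]
  field_simp
end
noncomputable section

def Sset (α β γ : ℝ) : Set ℝ :=
  { e : ℝ | ∃ u : ℝ → ℂ, InH1 u ∧ massSq u = γ ∧
      e = (1 / 2) * kinetic u - (α + β) / 3 * ∫ x : ℝ, ‖u x‖ ^ (3 : ℕ) }

lemma potential_two (f : ℝ → ℂ) : potential 2 f = ∫ x : ℝ, ‖f x‖ ^ (3 : ℕ) := by
  unfold potential
  congr 1; funext x
  rw [show (2:ℝ) + 1 = ((3:ℕ):ℝ) by norm_num, Real.rpow_natCast]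

lemma Sset_bddBelow {α β γ : ℝ} (hα : 0 < α) (hβ : 0 < β) (hγ : 0 < γ) :
    BddBelow (Sset α β γ) := by
  refine ⟨-(γ / 2 + ((α + β) / 3 * γ) ^ 2 / 2), fun e he => ?_⟩
  obtain ⟨u, hu, hm, rfl⟩ := he
  exact scalar_lb (by positivity) hγ hu hm

lemma Sset_nonempty {α β γ : ℝ} (hγ : 0 < γ) : (Sset α β γ).Nonempty := by
  obtain ⟨u, hu, hm⟩ := exists_witness γ hγ
  exact ⟨_, u, hu, hm, rfl⟩

lemma amgm3 {a b c : ℝ} (ha : 0 ≤ a) (hb : 0 ≤ b) (hc : 0 ≤ c) :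
    a * b * c ≤ (a ^ 3 + b ^ 3 + c ^ 3) / 3 := by
  nlinarith [mul_nonneg (add_nonneg (add_nonneg ha hb) hc) (sq_nonneg (a - b)),
    mul_nonneg (add_nonneg (add_nonneg ha hb) hc) (sq_nonneg (b - c)),
    mul_nonneg (add_nonneg (add_nonneg ha hb) hc) (sq_nonneg (a - c))]

lemma interaction_ptwise (u1 u2 u3 : ℝ → ℂ) (x : ℝ) :
    |(u1 x * u2 x * (starRingEnd ℂ) (u3 x)).re|
      ≤ (‖u1 x‖ ^ 3 + ‖u2 x‖ ^ 3 + ‖u3 x‖ ^ 3) / 3 := by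
  have h1 : |(u1 x * u2 x * (starRingEnd ℂ) (u3 x)).re| ≤ ‖u1 x‖ * ‖u2 x‖ * ‖u3 x‖ := by
    calc |(u1 x * u2 x * (starRingEnd ℂ) (u3 x)).re|
        ≤ ‖u1 x * u2 x * (starRingEnd ℂ) (u3 x)‖ := Complex.abs_re_le_norm _
      _ = ‖u1 x‖ * ‖u2 x‖ * ‖u3 x‖ := by
          rw [norm_mul, norm_mul, RCLike.norm_conj]
  exact h1.trans (amgm3 (norm_nonneg _) (norm_nonneg _) (norm_nonneg _))

lemma interaction_int {u1 u2 u3 : ℝ → ℂ} (h1 : InH1 u1) (h2 : InH1 u2) (h3 : InH1 u3) :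
    Integrable (fun x => (u1 x * u2 x * (starRingEnd ℂ) (u3 x)).re) volume := by
  refine Integrable.mono' (((cube_integrable h1).add (cube_integrable h2)).add
    (cube_integrable h3) |>.div_const 3)
    (Continuous.aestronglyMeasurable (Complex.continuous_re.comp
      ((h1.cont.mul h2.cont).mul (Complex.continuous_conj.comp h3.cont))))
    (Eventually.of_forall fun x => ?_)
  exact interaction_ptwise u1 u2 u3 x

lemma interaction_le {u1 u2 u3 : ℝ → ℂ} (h1 : InH1 u1) (h2 : InH1 u2) (h3 : InH1 u3) :
    interaction u1 u2 u3 ≤ ((∫ x : ℝ, ‖u1 x‖ ^ 3) + (∫ x : ℝ, ‖u2 x‖ ^ 3)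
      + (∫ x : ℝ, ‖u3 x‖ ^ 3)) / 3 := by
  have hint := interaction_int h1 h2 h3
  have : interaction u1 u2 u3
      ≤ ∫ x, (‖u1 x‖ ^ 3 + ‖u2 x‖ ^ 3 + ‖u3 x‖ ^ 3) / 3 := by
    refine integral_mono hint ((((cube_integrable h1).add (cube_integrable h2)).add
      (cube_integrable h3)).div_const 3) fun x => ?_
    exact (le_abs_self _).trans (interaction_ptwise u1 u2 u3 x)
  calc interaction u1 u2 u3 ≤ ∫ x, (‖u1 x‖ ^ 3 + ‖u2 x‖ ^ 3 + ‖u3 x‖ ^ 3) / 3 := this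
    _ = ((∫ x : ℝ, ‖u1 x‖ ^ 3) + (∫ x : ℝ, ‖u2 x‖ ^ 3) + (∫ x : ℝ, ‖u3 x‖ ^ 3)) / 3 := by
        rw [integral_div]
        congr 1
        have h12 : Integrable (fun x => ‖u1 x‖ ^ 3 + ‖u2 x‖ ^ 3) volume :=
          (cube_integrable h1).add (cube_integrable h2)
        rw [integral_add h12 (cube_integrable h3), integral_add (cube_integrable h1)
          (cube_integrable h2)]

lemma lower_dir {α β γ : ℝ} (hα : 0 < α) (hβ : 0 < β) (hγ : 0 < γ) {e : ℝ}
    (he : e ∈ constraintSet 2 α β γ γ γ) : 3 * sInf (Sset α β γ) ≤ e := by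
  obtain ⟨u1, u2, u3, h1, h2, h3, hm1, hm2, hm3, rfl⟩ := he
  have hbdd := Sset_bddBelow hα hβ hγ
  set P1 := ∫ x : ℝ, ‖u1 x‖ ^ 3
  set P2 := ∫ x : ℝ, ‖u2 x‖ ^ 3
  set P3 := ∫ x : ℝ, ‖u3 x‖ ^ 3
  have he1 : sInf (Sset α β γ) ≤ (1/2) * kinetic u1 - (α + β)/3 * P1 :=
    csInf_le hbdd ⟨u1, h1, hm1, rfl⟩
  have he2 : sInf (Sset α β γ) ≤ (1/2) * kinetic u2 - (α + β)/3 * P2 :=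
    csInf_le hbdd ⟨u2, h2, hm2, rfl⟩
  have he3 : sInf (Sset α β γ) ≤ (1/2) * kinetic u3 - (α + β)/3 * P3 :=
    csInf_le hbdd ⟨u3, h3, hm3, rfl⟩
  have hI : interaction u1 u2 u3 ≤ (P1 + P2 + P3) / 3 := interaction_le h1 h2 h3
  have hαI : α * interaction u1 u2 u3 ≤ α * ((P1 + P2 + P3) / 3) :=
    mul_le_mul_of_nonneg_left hI hα.le
  have hE : energy 2 α β u1 u2 u3
      = ((1/2) * kinetic u1 - β/3 * P1) + ((1/2) * kinetic u2 - β/3 * P2)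
        + ((1/2) * kinetic u3 - β/3 * P3) - α * interaction u1 u2 u3 := by
    unfold energy
    rw [potential_two u1, potential_two u2, potential_two u3,
      show (2:ℝ) + 1 = 3 by norm_num]
  rw [hE]
  linarith

end
noncomputable section

lemma sqrt_add_le' {a b : ℝ} (ha : 0 ≤ a) (hb : 0 ≤ b) :
    Real.sqrt (a + b) ≤ Real.sqrt a + Real.sqrt b := by
  have h : a + b ≤ (Real.sqrt a + Real.sqrt b) ^ 2 := by
    nlinarith [Real.sq_sqrt ha, Real.sq_sqrt hb, Real.sqrt_nonneg a, Real.sqrt_nonneg b,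
      mul_nonneg (Real.sqrt_nonneg a) (Real.sqrt_nonneg b)]
  calc Real.sqrt (a + b) ≤ Real.sqrt ((Real.sqrt a + Real.sqrt b) ^ 2) := Real.sqrt_le_sqrt h
    _ = Real.sqrt a + Real.sqrt b := Real.sqrt_sq (by positivity)

set_option maxHeartbeats 1000000 in
lemma upper_dir {α β γ : ℝ} (hα : 0 < α) (hβ : 0 < β) (hγ : 0 < γ) {d : ℝ}
    (hd : d ∈ Sset α β γ) {δ : ℝ} (hδ : 0 < δ) :
    ∃ e ∈ constraintSet 2 α β γ γ γ, e ≤ 3 * d + δ := by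
  obtain ⟨u, hu, hm, rfl⟩ := hd
  set C := (α + β) / 3 with hC
  have hCpos : 0 < C := by positivity
  set K := kinetic u with hK
  set Pu := ∫ x : ℝ, ‖u x‖ ^ (3:ℕ) with hPu
  set ε : ℕ → ℝ := fun n => ((n : ℝ) + 1)⁻¹ with hε
  have hεpos : ∀ n, 0 < ε n := fun n => by positivity
  have hε0 : Tendsto ε atTop (nhds 0) := by
    simpa [hε, one_div] using tendsto_one_div_add_atTop_nhds_zero_nat (𝕜 := ℝ)
  set g : ℝ → ℝ := fun x => ‖u x‖ ^ 2 with hg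
  have hg0 : ∀ x, (0:ℝ) ≤ g x := fun x => by positivity
  have hgpos : ∀ n x, 0 < g x + ε n ^ 2 := fun n x => by
    have := hg0 x; have := hεpos n; positivity
  have hsg : ∀ x, Real.sqrt (g x) = ‖u x‖ := fun x => Real.sqrt_sq (norm_nonneg _)
  set v : ℕ → ℝ → ℝ := fun n x => Real.sqrt (g x + ε n ^ 2) - ε n with hv
  set V : ℕ → ℝ → ℝ := fun n x => nsDeriv u x / (2 * Real.sqrt (g x + ε n ^ 2)) with hV
  have hsqle : ∀ n x, ‖u x‖ ≤ Real.sqrt (g x + ε n ^ 2) := by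
    intro n x
    rw [← hsg x]
    exact Real.sqrt_le_sqrt (by nlinarith [sq_nonneg (ε n)])
  have hvd : ∀ n x, HasDerivAt (v n) (V n x) x := by
    intro n x
    have hgd : HasDerivAt (fun y => g y + ε n ^ 2) (nsDeriv u x) x :=
      (hasDerivAt_normSq' hu.2.1 x).add_const _
    have hs : HasDerivAt Real.sqrt (1 / (2 * Real.sqrt (g x + ε n ^ 2))) (g x + ε n ^ 2) :=
      Real.hasDerivAt_sqrt (hgpos n x).ne'
    have := (hs.comp x hgd).sub_const (ε n)
    refine this.congr_deriv ?_
    simp only [hV]; ring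
  have hv0 : ∀ n x, 0 ≤ v n x := by
    intro n x
    have : ε n = Real.sqrt (ε n ^ 2) := (Real.sqrt_sq (hεpos n).le).symm
    simp only [hv, sub_nonneg]
    rw [this]
    exact Real.sqrt_le_sqrt (by nlinarith [hg0 x, Real.sq_sqrt (hεpos n).le])
  have hvle : ∀ n x, v n x ≤ ‖u x‖ := by
    intro n x
    have h1 : Real.sqrt (g x + ε n ^ 2) ≤ Real.sqrt (g x) + Real.sqrt (ε n ^ 2) :=
      sqrt_add_le' (hg0 x) (sq_nonneg _)
    have h2 : Real.sqrt (ε n ^ 2) = ε n := Real.sqrt_sq (hεpos n).le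
    simp only [hv]
    rw [← hsg x]
    linarith
  have hVle : ∀ n x, |V n x| ≤ ‖deriv u x‖ := by
    intro n x
    have hpos : 0 < 2 * Real.sqrt (g x + ε n ^ 2) := by
      have := Real.sqrt_pos.2 (hgpos n x); linarith
    simp only [hV, abs_div, abs_of_pos hpos]
    rw [div_le_iff₀ hpos]
    have h1 := nsDeriv_abs_le (f := u) x
    have h2 := hsqle n x
    nlinarith [norm_nonneg (deriv u x), norm_nonneg (u x)]
  have hvcont : ∀ n, Continuous (v n) := by
    intro n
    apply Continuous.sub _ continuous_const
    exact Real.continuous_sqrt.comp ((hu.cont.norm.pow 2).add continuous_const)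
  have hVmeas : ∀ n, Measurable (V n) := by
    intro n
    apply Measurable.div (nsDeriv_meas hu)
    exact (continuous_const.mul (Real.continuous_sqrt.comp
      ((hu.cont.norm.pow 2).add continuous_const))).measurable
  -- integral quantities
  set m : ℕ → ℝ := fun n => ∫ x, v n x ^ 2 with hmdef
  set P : ℕ → ℝ := fun n => ∫ x, v n x ^ 3 with hPdef
  have hv2int : ∀ n, Integrable (fun x => v n x ^ 2) volume := by
    intro n
    refine Integrable.mono' hu.intSq ((hvcont n).pow 2).aestronglyMeasurable
      (Eventually.of_forall fun x => ?_)
    rw [Real.norm_eq_abs, _root_.abs_of_nonneg (by positivity)]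
    have := hvle n x; have := hv0 n x
    nlinarith
  have hv3int : ∀ n, Integrable (fun x => v n x ^ 3) volume := by
    intro n
    refine Integrable.mono' (cube_integrable hu) ((hvcont n).pow 3).aestronglyMeasurable
      (Eventually.of_forall fun x => ?_)
    rw [Real.norm_eq_abs, _root_.abs_of_nonneg (pow_nonneg (hv0 n x) 3)]
    exact pow_le_pow_left₀ (hv0 n x) (hvle n x) 3
  have hVint : ∀ n, Integrable (fun x => V n x ^ 2) volume := by
    intro n
    refine Integrable.mono' hu.intDerivSq (((hVmeas n).pow_const 2).aestronglyMeasurable)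
      (Eventually.of_forall fun x => ?_)
    rw [Real.norm_eq_abs, _root_.abs_of_nonneg (sq_nonneg _)]
    have := hVle n x
    nlinarith [abs_nonneg (V n x), _root_.sq_abs (V n x)]
  have hmle : ∀ n, m n ≤ γ := by
    intro n
    rw [← hm]
    refine integral_mono (hv2int n) hu.intSq fun x => ?_
    have := hvle n x; have := hv0 n x
    simp only [massSq]
    nlinarith
  -- pointwise limits
  have hvlim : ∀ x, Tendsto (fun n => v n x) atTop (nhds ‖u x‖) := by
    intro x
    have h1 : Tendsto (fun n => g x + ε n ^ 2) atTop (nhds (g x + 0 ^ 2)) :=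
      tendsto_const_nhds.add (hε0.pow 2)
    rw [show g x + (0:ℝ) ^ 2 = g x by ring] at h1
    have h2 : Tendsto (fun n => Real.sqrt (g x + ε n ^ 2)) atTop (nhds (Real.sqrt (g x))) :=
      (Real.continuous_sqrt.continuousAt.tendsto).comp h1
    rw [hsg x] at h2
    have := h2.sub hε0
    simpa using this
  have hm_tend : Tendsto m atTop (nhds γ) := by
    rw [← hm]
    refine tendsto_integral_of_dominated_convergence (fun x => g x)
      (fun n => ((hvcont n).pow 2).aestronglyMeasurable) hu.intSq
      (fun n => Eventually.of_forall fun x => ?_)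
      (Eventually.of_forall fun x => ?_)
    · rw [Real.norm_eq_abs, _root_.abs_of_nonneg (by positivity)]
      show v n x ^ 2 ≤ ‖u x‖ ^ 2
      nlinarith [hvle n x, hv0 n x]
    · exact (hvlim x).pow 2
  have hP_tend : Tendsto P atTop (nhds Pu) := by
    refine tendsto_integral_of_dominated_convergence (fun x => ‖u x‖ ^ 3)
      (fun n => ((hvcont n).pow 3).aestronglyMeasurable) (cube_integrable hu)
      (fun n => Eventually.of_forall fun x => ?_)
      (Eventually.of_forall fun x => ?_)
    · rw [Real.norm_eq_abs, _root_.abs_of_nonneg (pow_nonneg (hv0 n x) 3)]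
      exact pow_le_pow_left₀ (hv0 n x) (hvle n x) 3
    · exact (hvlim x).pow 3
  -- scaling constants
  set c : ℕ → ℝ := fun n => Real.sqrt (γ / m n) with hc
  have hc_tend : Tendsto c atTop (nhds 1) := by
    have h1 : Tendsto (fun n => γ / m n) atTop (nhds (γ / γ)) :=
      tendsto_const_nhds.div hm_tend hγ.ne'
    rw [div_self hγ.ne'] at h1
    have := (Real.continuous_sqrt.continuousAt.tendsto).comp h1
    rw [Real.sqrt_one] at this; exact this
  set A : ℕ → ℝ := fun n => c n ^ 2 * (1 / 2 * K) - c n ^ 3 * (C * P n) with hA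
  have hA_tend : Tendsto A atTop (nhds (1 / 2 * K - C * Pu)) := by
    have h2 : Tendsto (fun k => c k ^ 2 * (1 / 2 * K)) atTop (nhds (1 ^ 2 * (1 / 2 * K))) :=
      (hc_tend.pow 2).mul_const _
    have h3 : Tendsto (fun k => c k ^ 3 * (C * P k)) atTop (nhds (1 ^ 3 * (C * Pu))) :=
      (hc_tend.pow 3).mul (hP_tend.const_mul C)
    have h4 := h2.sub h3
    simpa [hA] using h4
  -- choose n
  have hev : ∀ᶠ n in atTop, 0 < m n ∧ A n < (1 / 2 * K - C * Pu) + δ / 3 := by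
    refine (hm_tend.eventually (eventually_gt_nhds hγ)).and
      (hA_tend.eventually (eventually_lt_nhds (by linarith)))
  obtain ⟨n, hmn, hAn⟩ := hev.exists
  -- the scaled function
  have hmnle := hmle n
  have hcsq : c n ^ 2 = γ / m n := Real.sq_sqrt (by positivity)
  have hc1 : 1 ≤ c n := by
    rw [hc]
    rw [show (1:ℝ) = Real.sqrt 1 from (Real.sqrt_one).symm]
    exact Real.sqrt_le_sqrt ((one_le_div hmn).2 hmnle)
  have hc0 : 0 < c n := lt_of_lt_of_le one_pos hc1
  set h0 : ℝ → ℝ := fun x => c n * v n x with hh0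
  set h0' : ℝ → ℝ := fun x => c n * V n x with hh0'
  have hd0 : ∀ x, HasDerivAt h0 (h0' x) x := fun x => (hvd n x).const_mul (c n)
  have h0sq : Integrable (fun x => h0 x ^ 2) volume := by
    have := (hv2int n).const_mul (c n ^ 2)
    refine this.congr (Eventually.of_forall fun x => ?_)
    simp only [hh0]; ring
  have h0'sq : Integrable (fun x => h0' x ^ 2) volume := by
    have := (hVint n).const_mul (c n ^ 2)
    refine this.congr (Eventually.of_forall fun x => ?_)
    simp only [hh0']; ring
  set w : ℝ → ℂ := fun x => ((h0 x : ℝ) : ℂ) with hw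
  have hwH1 : InH1 w := ofReal_InH1 hd0 h0sq h0'sq
  have hwm : massSq w = γ := by
    rw [hw, ofReal_massSq]
    have : (fun x => h0 x ^ 2) = fun x => c n ^ 2 * v n x ^ 2 := by
      funext x; simp only [hh0]; ring
    rw [this, MeasureTheory.integral_const_mul, hcsq]
    field_simp; rfl
  -- energy computation
  have hwderiv : deriv w = fun x => ((h0' x : ℝ) : ℂ) := ofReal_deriv hd0
  set Kv : ℝ := ∫ x, V n x ^ 2 with hKvdef
  have hwkin : kinetic w = c n ^ 2 * Kv := by
    unfold kinetic
    have heq : (fun x => ‖deriv w x‖ ^ 2) = fun x => c n ^ 2 * V n x ^ 2 := by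
      funext x
      rw [hwderiv]
      show ‖((c n * V n x : ℝ) : ℂ)‖ ^ 2 = c n ^ 2 * V n x ^ 2
      rw [Complex.norm_real, Real.norm_eq_abs, _root_.sq_abs]
      ring
    rw [heq, MeasureTheory.integral_const_mul]
  have hKvle : Kv ≤ K := by
    have : (∫ x, V n x ^ 2) ≤ ∫ x, ‖deriv u x‖ ^ 2 := by
      refine integral_mono (hVint n) hu.intDerivSq fun x => ?_
      have h := hVle n x
      nlinarith [abs_nonneg (V n x), _root_.sq_abs (V n x), norm_nonneg (deriv u x)]
    exact this
  have hKv0 : 0 ≤ Kv := integral_nonneg fun x => sq_nonneg _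
  have hwnorm : ∀ x, ‖w x‖ = c n * v n x := by
    intro x
    show ‖((c n * v n x : ℝ) : ℂ)‖ = c n * v n x
    rw [Complex.norm_real, Real.norm_eq_abs,
      _root_.abs_of_nonneg (mul_nonneg hc0.le (hv0 n x))]
  have hwpot : potential 2 w = c n ^ 3 * P n := by
    rw [potential_two]
    have heq : (fun x : ℝ => ‖w x‖ ^ (3:ℕ)) = fun x => c n ^ 3 * v n x ^ 3 := by
      funext x
      rw [hwnorm x]; ring
    rw [heq, MeasureTheory.integral_const_mul]
  have hwint : interaction w w w = c n ^ 3 * P n := by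
    unfold interaction
    have heq : (fun x => (w x * w x * (starRingEnd ℂ) (w x)).re)
        = fun x => c n ^ 3 * v n x ^ 3 := by
      funext x
      show ((((c n * v n x : ℝ) : ℂ)) * (((c n * v n x : ℝ) : ℂ))
        * (starRingEnd ℂ) (((c n * v n x : ℝ) : ℂ))).re = c n ^ 3 * v n x ^ 3
      rw [Complex.conj_ofReal, ← Complex.ofReal_mul, ← Complex.ofReal_mul, Complex.ofReal_re]
      ring
    rw [heq, MeasureTheory.integral_const_mul]
  refine ⟨energy 2 α β w w w, ⟨w, w, w, hwH1, hwH1, hwH1, hwm, hwm, hwm, rfl⟩, ?_⟩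
  have hE : energy 2 α β w w w
      = 3 * (1 / 2 * (c n ^ 2 * Kv) - C * (c n ^ 3 * P n)) := by
    unfold energy
    rw [hwpot, hwkin, hwint, show (2:ℝ) + 1 = 3 by norm_num, hC]
    ring
  have hmono : 1 / 2 * (c n ^ 2 * Kv) ≤ c n ^ 2 * (1 / 2 * K) := by
    have h := mul_le_mul_of_nonneg_left hKvle (sq_nonneg (c n))
    linarith
  have hfin : energy 2 α β w w w ≤ 3 * A n := by
    rw [hE]
    simp only [hA]
    linarith
  have h3A : 3 * A n < 3 * (1 / 2 * K - C * Pu + δ / 3) :=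
    (mul_lt_mul_iff_right₀ (by norm_num : (0:ℝ) < 3)).2 hAn
  refine le_of_lt (lt_of_le_of_lt hfin (lt_of_lt_of_eq h3A ?_))
  ring
end

noncomputable section

theorem symmetric_infimum_eq_three_times_scalar
    (α β γ : ℝ) (hα : 0 < α) (hβ : 0 < β) (hγ : 0 < γ) :
    Iinf 2 α β γ γ γ
      = 3 * sInf { e : ℝ | ∃ u : ℝ → ℂ, InH1 u ∧ massSq u = γ ∧
          e = (1 / 2) * kinetic u - (α + β) / 3 * ∫ x : ℝ, ‖u x‖ ^ (3 : ℕ) } := by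
  have hSne := Sset_nonempty (α := α) (β := β) hγ
  have hSbdd := Sset_bddBelow hα hβ hγ
  have hCne : (constraintSet 2 α β γ γ γ).Nonempty := by
    obtain ⟨u, hu, hm⟩ := exists_witness γ hγ
    exact ⟨energy 2 α β u u u, u, u, u, hu, hu, hu, hm, hm, hm, rfl⟩
  have hCbdd : BddBelow (constraintSet 2 α β γ γ γ) :=
    ⟨3 * sInf (Sset α β γ), fun e he => lower_dir hα hβ hγ he⟩
  have hge : 3 * sInf (Sset α β γ) ≤ Iinf 2 α β γ γ γ :=
    le_csInf hCne fun e he => lower_dir hα hβ hγ he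
  have hle : Iinf 2 α β γ γ γ ≤ 3 * sInf (Sset α β γ) := by
    by_contra hcon
    push_neg at hcon
    set δ := Iinf 2 α β γ γ γ - 3 * sInf (Sset α β γ) with hδ
    have hδpos : 0 < δ := by simp only [hδ]; linarith
    obtain ⟨d, hdmem, hdlt⟩ := exists_lt_of_csInf_lt hSne
      (lt_add_of_pos_right (sInf (Sset α β γ)) (by positivity : (0:ℝ) < δ / 6))
    obtain ⟨e, hemem, hele⟩ := upper_dir hα hβ hγ hdmem (by positivity : (0:ℝ) < δ / 6)
    have h1 : Iinf 2 α β γ γ γ ≤ e := csInf_le hCbdd hemem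
    have h2 : δ = Iinf 2 α β γ γ γ - 3 * sInf (Sset α β γ) := hδ
    linarith
  exact le_antisymm hle hge

end
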